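/- For every integer n ≥ 1, Σ_{m=0}^n (−1)^m·A_{nm} = 1/A_{n0}. -/

import Mathlib

open Finset

/-- The coefficient `A_{nm} := Γ(n+m+1/2) / ((2m-1)·(n-m)!·m!·Γ(m+1/2))`. -/
noncomputable def Acoef (n m : ℕ) : ℝ :=
  Real.Gamma ((n : ℝ) + m + 1 / 2) /
    ((2 * (m : ℝ) - 1) * (Nat.factorial (n - m) : ℝ) * (Nat.factorial m : ℝ) *
      Real.Gamma ((m : ℝ) + 1 / 2))

open Polynomial
open scoped fwdDiff

noncomputable def qf (n m : ℕ) : ℝ := ∏ k ∈ range n, ((m : ℝ) + k + 1 / 2)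

lemma qf_pos (n m : ℕ) : 0 < qf n m := by
  apply Finset.prod_pos
  intro k _
  positivity

lemma qf_succ (n m : ℕ) : qf (n + 1) m = qf n m * ((m : ℝ) + n + 1 / 2) :=
  Finset.prod_range_succ _ _

lemma gamma_eq (n m : ℕ) :
    Real.Gamma ((n : ℝ) + m + 1 / 2) = qf n m * Real.Gamma ((m : ℝ) + 1 / 2) := by
  induction n with
  | zero => simp [qf]
  | succ n ih =>
      have hx : ((n : ℝ) + m + 1 / 2) ≠ 0 := by positivity
      have : ((n + 1 : ℕ) : ℝ) + m + 1 / 2 = ((n : ℝ) + m + 1 / 2) + 1 := by push_cast; ring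
      rw [this, Real.Gamma_add_one hx, ih, qf_succ]
      ring

lemma altkill (n : ℕ) : ∀ P : Polynomial ℝ, P.degree < (n : WithBot ℕ) →
    ∀ y : ℝ, (fwdDiff (1:ℝ))^[n] (fun x : ℝ => P.eval x) y = 0 := by
  induction n with
  | zero =>
      intro P hP y
      have hP0 : P = 0 := by
        rw [← Polynomial.degree_eq_bot, ← Nat.WithBot.lt_zero_iff]
        exact_mod_cast hP
      simp [hP0]
  | succ n ih =>
      intro P hP y
      rw [Function.iterate_succ_apply]
      have hD : Δ_[1] (fun x : ℝ => P.eval x)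
          = fun x : ℝ => (Polynomial.taylor 1 P - P).eval x := by
        funext x
        simp [fwdDiff, Polynomial.taylor_eval]
      rw [hD]
      refine ih _ ?_ y
      rcases eq_or_ne P 0 with h0 | h0
      · simp [h0]
      · have hdeg : (Polynomial.taylor (1:ℝ) P).degree = P.degree := by
          have h1 : (Polynomial.taylor (1:ℝ) P).natDegree = P.natDegree :=
            Polynomial.natDegree_taylor P 1
          have h2 : Polynomial.taylor (1:ℝ) P ≠ 0 := by
            intro h
            exact h0 (Polynomial.taylor_injective 1 (by simpa using h))
          rw [Polynomial.degree_eq_natDegree h2, Polynomial.degree_eq_natDegree h0, h1]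
        have hlc : (Polynomial.taylor (1:ℝ) P).leadingCoeff = P.leadingCoeff := by
          rw [Polynomial.taylor_apply, Polynomial.leadingCoeff_comp
            (by rw [Polynomial.natDegree_X_add_C]; norm_num),
            Polynomial.leadingCoeff_X_add_C, one_pow, mul_one]
        have h2 : Polynomial.taylor (1:ℝ) P ≠ 0 := by
          intro h
          exact h0 (Polynomial.taylor_injective 1 (by simpa using h))
        have hlt := Polynomial.degree_sub_lt hdeg h2 hlc
        rw [hdeg] at hlt
        have hle : P.degree ≤ (n : WithBot ℕ) := by
          rw [Polynomial.degree_eq_natDegree h0] at hP ⊢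
          exact_mod_cast Nat.lt_succ_iff.mp (by exact_mod_cast hP)
        exact lt_of_lt_of_le hlt hle

lemma altsum (n : ℕ) (P : Polynomial ℝ) (hP : P.degree < (n : WithBot ℕ)) :
    ∑ m ∈ range (n + 1), (-1 : ℝ) ^ m * (n.choose m : ℝ) * P.eval (m : ℝ) = 0 := by
  have h0 := fwdDiff_iter_eq_sum_shift (1 : ℝ) (fun x : ℝ => P.eval x) n 0
  rw [altkill n P hP 0] at h0
  have h1 : ∀ k ∈ range (n + 1), (-1 : ℝ) ^ k * (n.choose k : ℝ) * P.eval (k : ℝ)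
      = (-1 : ℝ) ^ n * (((-1 : ℤ) ^ (n - k) * (n.choose k : ℤ)) • (fun x : ℝ => P.eval x) (0 + k • (1:ℝ))) := by
    intro k hk
    have hkn : k ≤ n := Nat.lt_succ_iff.mp (Finset.mem_range.mp hk)
    have hpow : (-1 : ℝ) ^ n = (-1) ^ (n - k) * (-1) ^ k := by
      rw [← pow_add, Nat.sub_add_cancel hkn]
    have h2 : (-1 : ℝ) ^ (n - k) * (-1 : ℝ) ^ (n - k) = 1 := by
      rw [← pow_add, ← two_mul, pow_mul]
      norm_num
    simp only [zsmul_eq_mul, Int.cast_mul, Int.cast_pow, Int.cast_neg, Int.cast_one,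
      Int.cast_natCast, zero_add, nsmul_eq_mul, mul_one]
    rw [hpow]
    linear_combination (-((-1:ℝ)^k * (n.choose k : ℝ) * P.eval (k:ℝ))) * h2
  rw [Finset.sum_congr rfl h1, ← Finset.mul_sum, ← h0, mul_zero]

noncomputable def pf (n : ℕ) : Polynomial ℝ := ∏ k ∈ range n, (X + C ((k : ℝ) + 1 / 2))

lemma pf_eval (n m : ℕ) : (pf n).eval (m : ℝ) = qf n m := by
  simp only [pf, qf, Polynomial.eval_prod, Polynomial.eval_add, Polynomial.eval_X,
    Polynomial.eval_C]
  exact Finset.prod_congr rfl fun k _ => by ring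

lemma pf_degree (n : ℕ) : (pf n).degree = (n : WithBot ℕ) := by
  rw [pf, Polynomial.degree_prod,
    Finset.sum_congr rfl (fun (k : ℕ) (_ : k ∈ range n) => Polynomial.degree_X_add_C ((k:ℝ) + 1/2))]
  simp

lemma key0 (n : ℕ) : ∑ m ∈ range (n + 2), (-1 : ℝ) ^ m * ((n+1).choose m : ℝ) * qf n m = 0 := by
  have h := altsum (n + 1) (pf n) (by rw [pf_degree]; exact_mod_cast Nat.lt_succ_self n)
  simpa [pf_eval] using h

lemma key1 (n : ℕ) :
    ∑ m ∈ range (n + 2), (-1 : ℝ) ^ m * (qf n m / (((n + 1 - m).factorial : ℝ) * (m.factorial : ℝ))) = 0 := by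
  have h : ∀ m ∈ range (n + 2), (-1 : ℝ) ^ m * (qf n m / (((n + 1 - m).factorial : ℝ) * (m.factorial : ℝ)))
      = (1 / ((n+1).factorial : ℝ)) * ((-1 : ℝ) ^ m * ((n+1).choose m : ℝ) * qf n m) := by
    intro m hm
    have hm' : m ≤ n + 1 := Nat.lt_succ_iff.mp (Finset.mem_range.mp hm)
    have hc := Nat.choose_mul_factorial_mul_factorial hm'
    have hc' : (((n+1).choose m : ℝ)) * (m.factorial : ℝ) * (((n+1-m).factorial : ℝ)) = ((n+1).factorial : ℝ) := by
      exact_mod_cast congrArg (Nat.cast : ℕ → ℝ) hc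
    have h1 : ((n+1-m).factorial : ℝ) ≠ 0 := Nat.cast_ne_zero.mpr (Nat.factorial_ne_zero _)
    have h2 : (m.factorial : ℝ) ≠ 0 := Nat.cast_ne_zero.mpr (Nat.factorial_ne_zero _)
    have h3 : ((n+1).factorial : ℝ) ≠ 0 := Nat.cast_ne_zero.mpr (Nat.factorial_ne_zero _)
    field_simp
    linear_combination -qf n m * hc'
  rw [Finset.sum_congr rfl h, ← Finset.mul_sum, key0, mul_zero]

lemma two_cast_ne (m : ℕ) : (2 * (m : ℝ) - 1) ≠ 0 := by
  intro h
  have h2 : (2 * (m : ℝ)) = 1 := by linarith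
  have : ((2 * m : ℕ) : ℝ) = ((1 : ℕ) : ℝ) := by push_cast; linarith
  have := Nat.cast_injective this
  omega

lemma fact_ne (k : ℕ) : ((k.factorial : ℕ) : ℝ) ≠ 0 :=
  Nat.cast_ne_zero.mpr (Nat.factorial_ne_zero _)

lemma Acoef_eq (n m : ℕ) :
    Acoef n m = qf n m / ((2 * (m : ℝ) - 1) * ((n - m).factorial : ℝ) * (m.factorial : ℝ)) := by
  unfold Acoef
  rw [gamma_eq]
  have hG : Real.Gamma ((m : ℝ) + 1 / 2) ≠ 0 :=
    ne_of_gt (Real.Gamma_pos_of_pos (by positivity))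
  rw [show (2 * (m : ℝ) - 1) * ((n - m).factorial : ℝ) * (m.factorial : ℝ) *
      Real.Gamma ((m : ℝ) + 1 / 2)
    = ((2 * (m : ℝ) - 1) * ((n - m).factorial : ℝ) * (m.factorial : ℝ)) *
      Real.Gamma ((m : ℝ) + 1 / 2) from by ring,
    mul_div_mul_right _ _ hG]

lemma Acoef_zero (n : ℕ) : Acoef n 0 = -(qf n 0 / (n.factorial : ℝ)) := by
  rw [Acoef_eq]
  norm_num [div_neg]

lemma Acoef_zero_ne (n : ℕ) : Acoef n 0 ≠ 0 := by
  rw [Acoef_zero]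
  have h1 : (0 : ℝ) < qf n 0 := qf_pos n 0
  have h2 : (0 : ℝ) < (n.factorial : ℝ) := by exact_mod_cast Nat.factorial_pos n
  exact neg_ne_zero.mpr (ne_of_gt (div_pos h1 h2))

lemma step_pt (n m : ℕ) (h : m ≤ n) :
    (2 * (n : ℝ) + 1) * Acoef (n + 1) m
      = (2 * (n : ℝ) + 2) * Acoef n m
        + (4 * (n : ℝ) + 3) / 2 *
          (qf n m / (((n + 1 - m).factorial : ℝ) * (m.factorial : ℝ))) := by
  have hs : n + 1 - m = (n - m) + 1 := by omega
  rw [Acoef_eq, Acoef_eq, hs, qf_succ, Nat.factorial_succ]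
  have hcast : ((n - m : ℕ) : ℝ) = (n : ℝ) - m := Nat.cast_sub h
  have hpos : (0 : ℝ) < (n : ℝ) - (m : ℝ) + 1 := by
    rw [← hcast]; positivity
  push_cast [hcast]
  have e1 := two_cast_ne m
  have e2 : ((n - m).factorial : ℝ) ≠ 0 := fact_ne _
  have e3 : ((m).factorial : ℝ) ≠ 0 := fact_ne _
  have e4 : ((n : ℝ) - m + 1) ≠ 0 := ne_of_gt hpos
  field_simp
  ring

lemma step_bd (n : ℕ) :
    (2 * (n : ℝ) + 1) * Acoef (n + 1) (n + 1)
      = (4 * (n : ℝ) + 3) / 2 *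
          (qf n (n + 1) / (((n + 1 - (n + 1)).factorial : ℝ) * ((n + 1).factorial : ℝ))) := by
  rw [Acoef_eq, qf_succ, Nat.sub_self]
  push_cast
  have h1 : (2 * ((n : ℝ) + 1) - 1) ≠ 0 := by
    have h0 : (0 : ℝ) ≤ (n : ℝ) := Nat.cast_nonneg n
    intro h; linarith
  have h2 : ((n + 1).factorial : ℝ) ≠ 0 := fact_ne _
  field_simp
  try ring

lemma rel0 (n : ℕ) : (2 * (n : ℝ) + 2) * Acoef (n + 1) 0 = (2 * (n : ℝ) + 1) * Acoef n 0 := by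
  rw [Acoef_zero, Acoef_zero, qf_succ, Nat.factorial_succ]
  have h2 : ((n).factorial : ℝ) ≠ 0 := fact_ne _
  push_cast
  field_simp
  ring

/-- For every integer `n ≥ 1`, `Σ_{m=0}^n (-1)^m·A_{nm} = 1/A_{n0}`. -/
theorem stmt_4 (n : ℕ) (hn : 1 ≤ n) :
    ∑ m ∈ Finset.range (n + 1), (-1 : ℝ) ^ m * Acoef n m = 1 / Acoef n 0 := by
  induction n, hn using Nat.le_induction with
  | base =>
      rw [Finset.sum_range_succ, Finset.sum_range_one]
      simp only [Acoef_eq, qf]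
      norm_num
  | succ n hn ih =>
      have h21 : (2 * (n : ℝ) + 1) ≠ 0 := by positivity
      have key : (2 * (n : ℝ) + 1) * (∑ m ∈ range (n + 1 + 1), (-1 : ℝ) ^ m * Acoef (n + 1) m)
          = (2 * (n : ℝ) + 2) * ∑ m ∈ range (n + 1), (-1 : ℝ) ^ m * Acoef n m := by
        rw [Finset.sum_range_succ, mul_add, Finset.mul_sum]
        have hterm : ∀ m ∈ range (n + 1),
            (2 * (n : ℝ) + 1) * ((-1 : ℝ) ^ m * Acoef (n + 1) m)
              = (2 * (n : ℝ) + 2) * ((-1 : ℝ) ^ m * Acoef n m)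
                + (4 * (n : ℝ) + 3) / 2 *
                  ((-1 : ℝ) ^ m * (qf n m / (((n + 1 - m).factorial : ℝ) * (m.factorial : ℝ)))) := by
          intro m hm
          have h := step_pt n m (Nat.lt_succ_iff.mp (Finset.mem_range.mp hm))
          linear_combination (-1 : ℝ) ^ m * h
        rw [Finset.sum_congr rfl hterm, Finset.sum_add_distrib]
        have hb : (2 * (n : ℝ) + 1) * ((-1 : ℝ) ^ (n + 1) * Acoef (n + 1) (n + 1))
            = (4 * (n : ℝ) + 3) / 2 * ((-1 : ℝ) ^ (n + 1) *
                (qf n (n + 1) / (((n + 1 - (n + 1)).factorial : ℝ) * ((n + 1).factorial : ℝ)))) := by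
          linear_combination (-1 : ℝ) ^ (n + 1) * step_bd n
        rw [hb]
        have hsum := key1 n
        rw [Finset.sum_range_succ] at hsum
        rw [← Finset.mul_sum, ← Finset.mul_sum]
        linear_combination ((4 * (n : ℝ) + 3) / 2) * hsum
      rw [ih] at key
      have hA' : Acoef (n + 1) 0 ≠ 0 := Acoef_zero_ne (n + 1)
      have hA : Acoef n 0 ≠ 0 := Acoef_zero_ne n
      apply mul_left_cancel₀ h21
      rw [key]
      have rel := rel0 n
      field_simp
      linear_combination rel
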